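/- Let n ≥ 1, let L_1, …, L_n be nonzero real numbers, let X_1, …, X_{2n} be the anisotropic Heisenberg vector fields on ℝ^{2n+1}, let w_1, …, w_{2n} be the weights w_j = 1/(2|L_j|) for 1 ≤ j ≤ n and w_j = 1/(2|L_{j−n}|) for n+1 ≤ j ≤ 2n, and set Q = 2n + 2. Define ρ(x_1,…,x_{2n},t) = ( (Σ_{j=1}^{n} 2|L_j| x_j² + Σ_{j=n+1}^{2n} 2|L_{j−n}| x_j²)² + 16 t² )^{1/4}. Fix 1 < p < ∞ with p ≠ Q, and let u = ρ^{(p−Q)/(p−1)}. Then u satisfies the weighted p-Laplace equation Δ_p u = M(u)^{p−2} Σ_{i=1}^{2n} w_i X_i(X_i u) + (p−2) M(u)^{p−4} Σ_{i,j=1}^{2n} w_i w_j X_i(X_j u) · X_i u · X_j u = 0 at every point of ℝ^{2n+1} \ {0} where M(u) ≠ 0. -/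

import Mathlib

/-- Partial derivative of `f : ℝ^m → ℝ` in the `i`-th coordinate direction. -/
noncomputable def pderiv' {m : ℕ} (i : Fin m) (f : (Fin m → ℝ) → ℝ) (q : Fin m → ℝ) : ℝ :=
  fderiv ℝ f q (Pi.single i 1)

/-- The anisotropic Heisenberg vector fields on ℝ^{2n+1}. -/
noncomputable def X (n : ℕ) (L : Fin n → ℝ) (j : Fin (2*n))
    (f : (Fin (2*n+1) → ℝ) → ℝ) (q : Fin (2*n+1) → ℝ) : ℝ :=
  pderiv' ⟨(j : ℕ), by have := j.isLt; omega⟩ f q +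
    (if h : (j : ℕ) < n then
        -(L ⟨(j : ℕ), h⟩) * q ⟨(j : ℕ) + n, by have := j.isLt; omega⟩
      else
        (L ⟨(j : ℕ) - n, by have := j.isLt; omega⟩) * q ⟨(j : ℕ) - n, by have := j.isLt; omega⟩) *
      pderiv' ⟨2*n, by omega⟩ f q

/-- The weights `w_j = 1/(2|L_j|)` for `1 ≤ j ≤ n` and `w_j = 1/(2|L_{j−n}|)` for
`n+1 ≤ j ≤ 2n`. -/
noncomputable def wgt (n : ℕ) (L : Fin n → ℝ) (j : Fin (2*n)) : ℝ :=
  if h : (j : ℕ) < n then 1 / (2 * |L ⟨(j : ℕ), h⟩|)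
  else 1 / (2 * |L ⟨(j : ℕ) - n, by have := j.isLt; omega⟩|)

/-- `M(f) = (Σ_{j=1}^{2n} w_j (X_j f)²)^{1/2}`. -/
noncomputable def Mfun (n : ℕ) (L : Fin n → ℝ) (f : (Fin (2*n+1) → ℝ) → ℝ)
    (q : Fin (2*n+1) → ℝ) : ℝ :=
  Real.sqrt (∑ j : Fin (2*n), wgt n L j * (X n L j f q)^2)

/-- The gauge `ρ = ((Σ_{j=1}^{n} 2|L_j| x_j² + Σ_{j=n+1}^{2n} 2|L_{j−n}| x_j²)² + 16 t²)^{1/4}`. -/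
noncomputable def rho (n : ℕ) (L : Fin n → ℝ) (q : Fin (2*n+1) → ℝ) : ℝ :=
  ((∑ j : Fin (2*n),
      (if h : (j : ℕ) < n then 2 * |L ⟨(j : ℕ), h⟩|
       else 2 * |L ⟨(j : ℕ) - n, by have := j.isLt; omega⟩|) *
        (q ⟨(j : ℕ), by have := j.isLt; omega⟩)^2)^2
    + 16 * (q ⟨2*n, by omega⟩)^2) ^ ((1:ℝ)/4)

namespace RhoAux

open Finset

def tI (n : ℕ) : Fin (2*n+1) := ⟨2*n, by omega⟩
def em (n : ℕ) (j : Fin (2*n)) : Fin (2*n+1) := ⟨(j:ℕ), by have := j.isLt; omega⟩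
def sg (n : ℕ) (j : Fin (2*n)) : Fin (2*n) :=
  if h : (j:ℕ) < n then ⟨(j:ℕ)+n, by omega⟩ else ⟨(j:ℕ)-n, by have := j.isLt; omega⟩
noncomputable def aa (n : ℕ) (L : Fin n → ℝ) (j : Fin (2*n)) : ℝ :=
  if h : (j:ℕ) < n then 2*|L ⟨(j:ℕ),h⟩| else 2*|L ⟨(j:ℕ)-n, by have := j.isLt; omega⟩|
noncomputable def cc (n : ℕ) (L : Fin n → ℝ) (j : Fin (2*n)) : ℝ :=
  if h : (j:ℕ) < n then -(L ⟨(j:ℕ),h⟩) else L ⟨(j:ℕ)-n, by have := j.isLt; omega⟩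

noncomputable def Sq (n : ℕ) (L : Fin n → ℝ) (q : Fin (2*n+1) → ℝ) : ℝ :=
  ∑ j : Fin (2*n), aa n L j * (q (em n j))^2
noncomputable def Fq (n : ℕ) (L : Fin n → ℝ) (q : Fin (2*n+1) → ℝ) : ℝ :=
  (Sq n L q)^2 + 16*(q (tI n))^2
noncomputable def Hf (n : ℕ) (L : Fin n → ℝ) (i j : Fin (2*n)) (q : Fin (2*n+1) → ℝ) : ℝ :=
  2*(aa n L i * q (em n i))*(aa n L j * q (em n j))
  + (if i = j then Sq n L q * aa n L j else 0)
  + (if i = sg n j then 8 * q (tI n) * cc n L j else 0)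
  + 8*(cc n L i * q (em n (sg n i)))*(cc n L j * q (em n (sg n j)))

noncomputable def Gf (n : ℕ) (L : Fin n → ℝ) (j : Fin (2*n)) (q : Fin (2*n+1) → ℝ) : ℝ :=
  aa n L j * q (em n j) * Sq n L q + 8 * q (tI n) * (cc n L j * q (em n (sg n j)))

theorem X_eq (n : ℕ) (L : Fin n → ℝ) (j : Fin (2*n)) (f : (Fin (2*n+1) → ℝ) → ℝ)
    (q : Fin (2*n+1) → ℝ) :
    X n L j f q = pderiv' (em n j) f q + (cc n L j * q (em n (sg n j))) * pderiv' (tI n) f q := by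
  unfold X cc sg em tI
  rcases lt_or_ge (j:ℕ) n with h | h
  · simp [h]
  · simp [not_lt.mpr h]

theorem rho_eq (n : ℕ) (L : Fin n → ℝ) (q : Fin (2*n+1) → ℝ) :
    rho n L q = (Fq n L q) ^ ((1:ℝ)/4) := rfl

theorem Fq_nonneg (n : ℕ) (L : Fin n → ℝ) (q : Fin (2*n+1) → ℝ) : 0 ≤ Fq n L q := by
  unfold Fq; positivity

theorem Sq_nonneg (n : ℕ) (L : Fin n → ℝ) (q : Fin (2*n+1) → ℝ) : 0 ≤ Sq n L q := by
  unfold Sq; apply Finset.sum_nonneg; intro j _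
  have : 0 ≤ aa n L j := by unfold aa; split <;> positivity
  positivity

theorem Fq_pos (n : ℕ) (L : Fin n → ℝ) (hL : ∀ j, L j ≠ 0) (q : Fin (2*n+1) → ℝ) (hq : q ≠ 0) :
    0 < Fq n L q := by
  rcases (Fq_nonneg n L q).lt_or_eq with h | h
  · exact h
  exfalso
  have hS : Sq n L q = 0 ∧ q (tI n) = 0 := by
    have h0 : (Sq n L q)^2 + 16*(q (tI n))^2 = 0 := by rw [Fq] at h; linarith
    have h1 : (Sq n L q)^2 = 0 ∧ 16*(q (tI n))^2 = 0 := by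
      constructor <;> nlinarith [sq_nonneg (Sq n L q), sq_nonneg (q (tI n))]
    constructor
    · exact pow_eq_zero_iff (n := 2) (by norm_num) |>.mp h1.1
    · nlinarith [h1.2]
  apply hq
  funext i
  rcases lt_or_ge (i : ℕ) (2*n) with hi | hi
  · -- coordinate x
    have hx : ∀ j : Fin (2*n), aa n L j * (q (em n j))^2 = 0 := by
      intro j
      have hnn : ∀ k : Fin (2*n), 0 ≤ aa n L k * (q (em n k))^2 := by
        intro k
        have : 0 ≤ aa n L k := by unfold aa; split <;> positivity
        positivity
      exact (Finset.sum_eq_zero_iff_of_nonneg (fun k _ => hnn k)).mp hS.1 j (Finset.mem_univ j)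
    have := hx ⟨i, hi⟩
    have ha : 0 < aa n L ⟨i, hi⟩ := by
      unfold aa; split <;> simp [abs_pos, hL _]
    have hq0 : q (em n ⟨i, hi⟩) = 0 := by
      rcases mul_eq_zero.mp this with h' | h'
      · exact absurd h' (ne_of_gt ha)
      · exact pow_eq_zero_iff (by norm_num) |>.mp h'
    have : em n ⟨i, hi⟩ = i := by apply Fin.ext; rfl
    rw [this] at hq0
    simpa using hq0
  · have : i = tI n := by apply Fin.ext; have := i.isLt; simp [tI]; omega
    rw [this]; simpa using hS.2


def lo (n : ℕ) (j : Fin n) : Fin (2*n) := ⟨(j:ℕ), by have := j.isLt; omega⟩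
def hi (n : ℕ) (j : Fin n) : Fin (2*n) := ⟨(j:ℕ)+n, by have := j.isLt; omega⟩

theorem sum_pair (n : ℕ) (g : Fin (2*n) → ℝ) :
    ∑ j, g j = ∑ j : Fin n, (g (lo n j) + g (hi n j)) := by
  have e : n + n = 2*n := by omega
  have h1 : ∑ i : Fin (n+n), g (Fin.cast e i) = ∑ j : Fin (2*n), g j :=
    Fintype.sum_equiv (finCongr e) _ _ (fun i => rfl)
  rw [← h1, Fin.sum_univ_add, ← Finset.sum_add_distrib]
  apply Finset.sum_congr rfl
  intro j _
  congr 1 <;> · congr 1; apply Fin.ext; simp [lo, hi]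

variable {n : ℕ} (L : Fin n → ℝ)

theorem aa_lo (j : Fin n) : aa n L (lo n j) = 2*|L j| := by
  simp [aa, lo, j.isLt]

theorem aa_hi (j : Fin n) : aa n L (hi n j) = 2*|L j| := by
  have h : ¬ ((j:ℕ)+n < n) := by omega
  simp [aa, hi, h]

theorem cc_lo (j : Fin n) : cc n L (lo n j) = -(L j) := by
  simp [cc, lo, j.isLt]

theorem cc_hi (j : Fin n) : cc n L (hi n j) = L j := by
  have h : ¬ ((j:ℕ)+n < n) := by omega
  simp [cc, hi, h]

theorem wgt_lo (j : Fin n) : wgt n L (lo n j) = 1/(2*|L j|) := by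
  simp [wgt, lo, j.isLt]

theorem wgt_hi (j : Fin n) : wgt n L (hi n j) = 1/(2*|L j|) := by
  have h : ¬ ((j:ℕ)+n < n) := by omega
  simp [wgt, hi, h]

theorem sg_lo (j : Fin n) : sg n (lo n j) = hi n j := by
  apply Fin.ext; simp [sg, lo, hi, j.isLt]

theorem sg_hi (j : Fin n) : sg n (hi n j) = lo n j := by
  have h : ¬ ((j:ℕ)+n < n) := by omega
  apply Fin.ext; simp [sg, lo, hi, h]

theorem wgt_mul_aa (hL : ∀ j, L j ≠ 0) (i : Fin (2*n)) : wgt n L i * aa n L i = 1 := by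
  unfold wgt aa
  split <;> · rw [div_mul_eq_mul_div, one_mul, div_eq_one_iff_eq] <;> simp [abs_ne_zero, hL _]

theorem sg_ne (hn : 1 ≤ n) (i : Fin (2*n)) : sg n i ≠ i := by
  intro h
  have := congrArg Fin.val h
  unfold sg at this
  split at this <;> simp at this <;> omega


theorem sg_invol (i : Fin (2*n)) : sg n (sg n i) = i := by
  apply Fin.ext
  unfold sg
  rcases lt_or_ge (i:ℕ) n with h | h
  · have h2 : ¬ ((i:ℕ)+n < n) := by omega
    simp [h, h2]
  · have h2 : (i:ℕ)-n < n := by have := i.isLt; omega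
    have := i.isLt
    simp [not_lt.mpr h, h2]
    omega

section Identities

variable (q : Fin (2*n+1) → ℝ)

theorem sumI2 (hL : ∀ j, L j ≠ 0) : ∑ i : Fin (2*n), wgt n L i * (aa n L i * q (em n i))^2 = Sq n L q := by
  rw [Sq]
  apply Finset.sum_congr rfl
  intro i _
  have h := wgt_mul_aa L hL i
  have : wgt n L i * (aa n L i * q (em n i))^2
      = (wgt n L i * aa n L i) * (aa n L i * (q (em n i))^2) := by ring
  rw [this, h, one_mul]

theorem sumI3 :
    ∑ i : Fin (2*n), wgt n L i * (aa n L i * q (em n i)) * (cc n L i * q (em n (sg n i))) = 0 := by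
  rw [sum_pair]
  apply Finset.sum_eq_zero
  intro j _
  simp only [aa_lo, aa_hi, cc_lo, cc_hi, wgt_lo, wgt_hi, sg_lo, sg_hi]
  ring

theorem sumI4 (hL : ∀ j, L j ≠ 0) :
    ∑ i : Fin (2*n), wgt n L i * (cc n L i * q (em n (sg n i)))^2 = Sq n L q / 4 := by
  have hSq : Sq n L q
      = ∑ j : Fin n, (2*|L j| * (q (em n (lo n j)))^2 + 2*|L j| * (q (em n (hi n j)))^2) := by
    rw [Sq, sum_pair]
    exact Finset.sum_congr rfl fun j _ => by rw [aa_lo, aa_hi]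
  rw [sum_pair, hSq, Finset.sum_div]
  apply Finset.sum_congr rfl
  intro j _
  simp only [cc_lo, cc_hi, wgt_lo, wgt_hi, sg_lo, sg_hi]
  have hA : |L j| ≠ 0 := abs_ne_zero.mpr (hL j)
  have h2 : L j * L j = |L j| * |L j| := (abs_mul_abs_self (L j)).symm
  field_simp
  ring_nf
  nlinarith [h2, sq_nonneg (q (em n (lo n j))), sq_nonneg (q (em n (hi n j)))]

theorem sumI5 (hL : ∀ j, L j ≠ 0) : ∑ i : Fin (2*n), wgt n L i * aa n L i = 2*(n:ℝ) := by
  rw [Finset.sum_congr rfl (fun i _ => wgt_mul_aa L hL i)]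
  simp

theorem sumI6 (f : Fin (2*n) → ℝ) :
    ∑ i : Fin (2*n), wgt n L i * wgt n L (sg n i) * cc n L (sg n i) * f i * f (sg n i) = 0 := by
  rw [sum_pair]
  apply Finset.sum_eq_zero
  intro j _
  simp only [cc_lo, cc_hi, wgt_lo, wgt_hi, sg_lo, sg_hi]
  ring


theorem sumD1 (hL : ∀ j, L j ≠ 0) :
    ∑ i : Fin (2*n), wgt n L i * Gf n L i q * (aa n L i * q (em n i)) = (Sq n L q)^2 := by
  have key : ∀ i : Fin (2*n), wgt n L i * Gf n L i q * (aa n L i * q (em n i))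
      = Sq n L q * (wgt n L i * (aa n L i * q (em n i))^2)
        + (8 * q (tI n)) * (wgt n L i * (aa n L i * q (em n i)) * (cc n L i * q (em n (sg n i)))) := by
    intro i; rw [Gf]; ring
  rw [Finset.sum_congr rfl (fun i _ => key i), Finset.sum_add_distrib, ← Finset.mul_sum,
    ← Finset.mul_sum, sumI2 L q hL, sumI3 L q]
  ring

theorem sumD2 (hL : ∀ j, L j ≠ 0) :
    ∑ i : Fin (2*n), wgt n L i * Gf n L i q * (cc n L i * q (em n (sg n i)))
      = 2 * q (tI n) * Sq n L q := by
  have key : ∀ i : Fin (2*n), wgt n L i * Gf n L i q * (cc n L i * q (em n (sg n i)))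
      = Sq n L q * (wgt n L i * (aa n L i * q (em n i)) * (cc n L i * q (em n (sg n i))))
        + (8 * q (tI n)) * (wgt n L i * (cc n L i * q (em n (sg n i)))^2) := by
    intro i; rw [Gf]; ring
  rw [Finset.sum_congr rfl (fun i _ => key i), Finset.sum_add_distrib, ← Finset.mul_sum,
    ← Finset.mul_sum, sumI3 L q, sumI4 L q hL]
  ring

theorem sumP1 (hL : ∀ j, L j ≠ 0) :
    ∑ i : Fin (2*n), wgt n L i * (Gf n L i q)^2 = Sq n L q * Fq n L q := by
  have key : ∀ i : Fin (2*n), wgt n L i * (Gf n L i q)^2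
      = (Sq n L q)^2 * (wgt n L i * (aa n L i * q (em n i))^2)
        + (16 * q (tI n) * Sq n L q) *
            (wgt n L i * (aa n L i * q (em n i)) * (cc n L i * q (em n (sg n i))))
        + (64 * (q (tI n))^2) * (wgt n L i * (cc n L i * q (em n (sg n i)))^2) := by
    intro i; rw [Gf]; ring
  rw [Finset.sum_congr rfl (fun i _ => key i), Finset.sum_add_distrib, Finset.sum_add_distrib,
    ← Finset.mul_sum, ← Finset.mul_sum, ← Finset.mul_sum, sumI2 L q hL, sumI3 L q,
    sumI4 L q hL, Fq]
  ring

theorem sumP2 (hn : 1 ≤ n) (hL : ∀ j, L j ≠ 0) :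
    ∑ i : Fin (2*n), wgt n L i * Hf n L i i q = (2*(n:ℝ)+4) * Sq n L q := by
  have key : ∀ i : Fin (2*n), wgt n L i * Hf n L i i q
      = 2 * (wgt n L i * (aa n L i * q (em n i))^2)
        + Sq n L q * (wgt n L i * aa n L i)
        + 8 * (wgt n L i * (cc n L i * q (em n (sg n i)))^2) := by
    intro i
    rw [Hf, if_pos rfl, if_neg (fun h => sg_ne hn i h.symm)]
    ring
  rw [Finset.sum_congr rfl (fun i _ => key i), Finset.sum_add_distrib, Finset.sum_add_distrib,
    ← Finset.mul_sum, ← Finset.mul_sum, ← Finset.mul_sum, sumI2 L q hL, sumI4 L q hL,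
    sumI5 L hL]
  ring

theorem innerP3 (i : Fin (2*n)) :
    ∑ j : Fin (2*n), wgt n L j * Gf n L j q * Hf n L i j q
      = 2 * (aa n L i * q (em n i)) *
          (∑ j : Fin (2*n), wgt n L j * Gf n L j q * (aa n L j * q (em n j)))
        + Sq n L q * (wgt n L i * Gf n L i q * aa n L i)
        + 8 * q (tI n) * (wgt n L (sg n i) * Gf n L (sg n i) q * cc n L (sg n i))
        + 8 * (cc n L i * q (em n (sg n i))) *
            (∑ j : Fin (2*n), wgt n L j * Gf n L j q * (cc n L j * q (em n (sg n j)))) := by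
  have key : ∀ j : Fin (2*n), wgt n L j * Gf n L j q * Hf n L i j q
      = 2 * (aa n L i * q (em n i)) * (wgt n L j * Gf n L j q * (aa n L j * q (em n j)))
        + (if j = i then Sq n L q * (wgt n L j * Gf n L j q * aa n L j) else 0)
        + (if j = sg n i then 8 * q (tI n) * (wgt n L j * Gf n L j q * cc n L j) else 0)
        + 8 * (cc n L i * q (em n (sg n i))) *
            (wgt n L j * Gf n L j q * (cc n L j * q (em n (sg n j)))) := by
    intro j
    rw [Hf]
    have e1 : (i = j) ↔ (j = i) := eq_comm
    have e2 : (i = sg n j) ↔ (j = sg n i) := by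
      constructor
      · intro h; rw [h, sg_invol]
      · intro h; rw [h, sg_invol]
    rw [if_congr e1 rfl rfl, if_congr e2 rfl rfl]
    split_ifs <;> ring
  rw [Finset.sum_congr rfl (fun j _ => key j)]
  rw [Finset.sum_add_distrib, Finset.sum_add_distrib, Finset.sum_add_distrib,
    Finset.sum_ite_eq' Finset.univ i, Finset.sum_ite_eq' Finset.univ (sg n i),
    ← Finset.mul_sum, ← Finset.mul_sum]
  simp

theorem sumP3 (hL : ∀ j, L j ≠ 0) :
    ∑ i : Fin (2*n), ∑ j : Fin (2*n),
        wgt n L i * wgt n L j * Gf n L i q * Gf n L j q * Hf n L i j q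
      = 3 * (Sq n L q)^2 * Fq n L q := by
  have step1 : ∀ i : Fin (2*n),
      ∑ j : Fin (2*n), wgt n L i * wgt n L j * Gf n L i q * Gf n L j q * Hf n L i j q
        = (wgt n L i * Gf n L i q) * ∑ j : Fin (2*n), wgt n L j * Gf n L j q * Hf n L i j q := by
    intro i
    rw [Finset.mul_sum]
    exact Finset.sum_congr rfl fun j _ => by ring
  rw [Finset.sum_congr rfl (fun i _ => step1 i)]
  have step2 : ∀ i : Fin (2*n),
      (wgt n L i * Gf n L i q) * ∑ j : Fin (2*n), wgt n L j * Gf n L j q * Hf n L i j q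
        = 2 * (Sq n L q)^2 * (wgt n L i * Gf n L i q * (aa n L i * q (em n i)))
          + Sq n L q * ((wgt n L i * aa n L i) * (wgt n L i * (Gf n L i q)^2))
          + 8 * q (tI n) *
              (wgt n L i * wgt n L (sg n i) * cc n L (sg n i) * Gf n L i q * Gf n L (sg n i) q)
          + 16 * q (tI n) * Sq n L q *
              (wgt n L i * Gf n L i q * (cc n L i * q (em n (sg n i)))) := by
    intro i
    rw [innerP3 L q i, sumD1 L q hL, sumD2 L q hL]
    ring
  rw [Finset.sum_congr rfl (fun i _ => step2 i)]
  rw [Finset.sum_add_distrib, Finset.sum_add_distrib, Finset.sum_add_distrib,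
    ← Finset.mul_sum, ← Finset.mul_sum, ← Finset.mul_sum, ← Finset.mul_sum,
    sumD1 L q hL, sumD2 L q hL, sumI6 L (fun j => Gf n L j q)]
  have step3 : ∑ i : Fin (2*n), (wgt n L i * aa n L i) * (wgt n L i * (Gf n L i q)^2)
      = Sq n L q * Fq n L q := by
    rw [Finset.sum_congr rfl (fun i _ => by rw [wgt_mul_aa L hL i, one_mul]), sumP1 L q hL]
  rw [step3, Fq]
  ring

end Identities


section Calculus

noncomputable def prj {m : ℕ} (i : Fin m) : (Fin m → ℝ) →L[ℝ] ℝ := ContinuousLinearMap.proj i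

theorem prj_single {m : ℕ} (i k : Fin m) :
    prj i (Pi.single k (1:ℝ)) = if i = k then 1 else 0 := by
  simp [prj, Pi.single_apply]

theorem hasP {m : ℕ} (i : Fin m) (q : Fin m → ℝ) :
    HasFDerivAt (fun q : Fin m → ℝ => q i) (prj i) q := hasFDerivAt_apply i q

theorem em_inj {i j : Fin (2*n)} : em n i = em n j ↔ i = j := by
  constructor
  · intro h
    have h2 : (em n i).val = (em n j).val := congrArg Fin.val h
    exact Fin.ext h2
  · intro h; rw [h]

theorem hasSq2 {m : ℕ} (k : Fin m) (q : Fin m → ℝ) :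
    HasFDerivAt (fun y : Fin m → ℝ => y k ^ 2) ((2 * q k) • prj k) q := by
  have h := (hasP k q).mul (hasP k q)
  have e : q k • prj k + q k • prj k = (2 * q k) • prj k := by
    rw [← add_smul]; congr 1; ring
  rw [e] at h
  have e2 : (fun y : Fin m → ℝ => y k ^ 2) = fun y => y k * y k := by
    funext y; ring
  rw [e2]
  exact h

theorem em_ne_tI (i : Fin (2*n)) : em n i ≠ tI n := by
  intro h
  have := congrArg Fin.val h
  simp [em, tI] at this
  have := i.isLt
  omega

noncomputable def S' (n : ℕ) (L : Fin n → ℝ) (q : Fin (2*n+1) → ℝ) :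
    (Fin (2*n+1) → ℝ) →L[ℝ] ℝ :=
  ∑ j : Fin (2*n), (2 * aa n L j * q (em n j)) • prj (em n j)

theorem hasS (q : Fin (2*n+1) → ℝ) : HasFDerivAt (Sq n L) (S' n L q) q := by
  unfold Sq S'
  apply HasFDerivAt.fun_sum
  intro j _
  have h2 := (hasSq2 (em n j) q).const_mul (aa n L j)
  have : aa n L j • (2 * q (em n j)) • prj (em n j)
      = (2 * aa n L j * q (em n j)) • prj (em n j) := by
    rw [smul_smul]; congr 1; ring
  rw [← this]
  exact h2

theorem S'_app_em (q : Fin (2*n+1) → ℝ) (i : Fin (2*n)) :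
    S' n L q (Pi.single (em n i) 1) = 2 * aa n L i * q (em n i) := by
  rw [S', ContinuousLinearMap.sum_apply]
  have key : ∀ j : Fin (2*n), ((2 * aa n L j * q (em n j)) • prj (em n j)) (Pi.single (em n i) 1)
      = if j = i then 2 * aa n L j * q (em n j) else 0 := by
    intro j
    rw [ContinuousLinearMap.smul_apply, prj_single]
    by_cases h : j = i
    · simp [h]
    · rw [if_neg (fun he => h (em_inj.mp he)), if_neg h]; simp
  rw [Finset.sum_congr rfl (fun j _ => key j), Finset.sum_ite_eq' Finset.univ i]
  simp

theorem S'_app_t (q : Fin (2*n+1) → ℝ) :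
    S' n L q (Pi.single (tI n) 1) = 0 := by
  rw [S', ContinuousLinearMap.sum_apply]
  apply Finset.sum_eq_zero
  intro j _
  rw [ContinuousLinearMap.smul_apply, prj_single, if_neg (em_ne_tI j)]
  simp

noncomputable def F' (n : ℕ) (L : Fin n → ℝ) (q : Fin (2*n+1) → ℝ) :
    (Fin (2*n+1) → ℝ) →L[ℝ] ℝ :=
  (2 * Sq n L q) • S' n L q + (32 * q (tI n)) • prj (tI n)

theorem hasF (q : Fin (2*n+1) → ℝ) : HasFDerivAt (Fq n L) (F' n L q) q := by
  unfold Fq F'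
  have h1 := (hasS (L := L) q).mul (hasS (L := L) q)
  have h2 := (hasSq2 (tI n) q).const_mul (16:ℝ)
  have e1 : Sq n L q • S' n L q + Sq n L q • S' n L q = (2 * Sq n L q) • S' n L q := by
    rw [← add_smul]; congr 1; ring
  have e2 : (16:ℝ) • (2 * q (tI n)) • prj (tI n) = (32 * q (tI n)) • prj (tI n) := by
    rw [smul_smul]; congr 1; ring
  rw [e1] at h1
  rw [e2] at h2
  have e3 : (fun y => (Sq n L y)^2 + 16 * (y (tI n))^2)
      = fun y => Sq n L y * Sq n L y + 16 * (y (tI n))^2 := by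
    funext y; ring
  rw [e3]
  exact h1.add h2

theorem F'_app_em (q : Fin (2*n+1) → ℝ) (i : Fin (2*n)) :
    F' n L q (Pi.single (em n i) 1) = 4 * Sq n L q * (aa n L i * q (em n i)) := by
  rw [F', ContinuousLinearMap.add_apply, ContinuousLinearMap.smul_apply,
    ContinuousLinearMap.smul_apply, S'_app_em, prj_single, if_neg (Ne.symm (em_ne_tI i))]
  simp [smul_eq_mul]
  ring

theorem F'_app_t (q : Fin (2*n+1) → ℝ) :
    F' n L q (Pi.single (tI n) 1) = 32 * q (tI n) := by
  rw [F', ContinuousLinearMap.add_apply, ContinuousLinearMap.smul_apply,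
    ContinuousLinearMap.smul_apply, S'_app_t, prj_single, if_pos rfl]
  simp [smul_eq_mul]

theorem contF : Continuous (Fq n L) := by
  have h : Differentiable ℝ (Fq n L) := fun q => (hasF (L := L) q).differentiableAt
  exact h.continuous

end Calculus


section UCalc

noncomputable def Uf (n : ℕ) (L : Fin n → ℝ) (γ : ℝ) (q : Fin (2*n+1) → ℝ) : ℝ :=
  (Fq n L q) ^ (γ/4)

noncomputable def Vf (n : ℕ) (L : Fin n → ℝ) (γ : ℝ) (j : Fin (2*n)) (q : Fin (2*n+1) → ℝ) : ℝ :=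
  γ * ((Fq n L q) ^ (γ/4 - 1) * Gf n L j q)

theorem hasU (γ : ℝ) (q : Fin (2*n+1) → ℝ) (hq : Fq n L q ≠ 0) :
    HasFDerivAt (Uf n L γ) ((γ/4 * (Fq n L q) ^ (γ/4 - 1)) • F' n L q) q := by
  have h := (hasF (L := L) q).rpow_const (p := γ/4) (Or.inl hq)
  exact h

theorem Xu (γ : ℝ) (j : Fin (2*n)) (q : Fin (2*n+1) → ℝ) (hq : Fq n L q ≠ 0) :
    X n L j (Uf n L γ) q = Vf n L γ j q := by
  rw [X_eq, pderiv', pderiv', (hasU L γ q hq).fderiv]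
  rw [ContinuousLinearMap.smul_apply, ContinuousLinearMap.smul_apply, smul_eq_mul, smul_eq_mul,
    F'_app_em, F'_app_t, Vf, Gf]
  ring

noncomputable def G'c (n : ℕ) (L : Fin n → ℝ) (j : Fin (2*n)) (q : Fin (2*n+1) → ℝ) :
    (Fin (2*n+1) → ℝ) →L[ℝ] ℝ :=
  (aa n L j * q (em n j)) • S' n L q + Sq n L q • (aa n L j • prj (em n j))
    + ((8 * q (tI n)) • (cc n L j • prj (em n (sg n j)))
       + (cc n L j * q (em n (sg n j))) • ((8:ℝ) • prj (tI n)))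

theorem hasG (j : Fin (2*n)) (q : Fin (2*n+1) → ℝ) :
    HasFDerivAt (fun q' => Gf n L j q') (G'c n L j q) q := by
  have h1 : HasFDerivAt (fun q' : Fin (2*n+1) → ℝ => aa n L j * q' (em n j))
      (aa n L j • prj (em n j)) q := (hasP (em n j) q).const_mul _
  have h2 := h1.mul (hasS (L := L) q)
  have h3 : HasFDerivAt (fun q' : Fin (2*n+1) → ℝ => 8 * q' (tI n))
      ((8:ℝ) • prj (tI n)) q := (hasP (tI n) q).const_mul _
  have h4 : HasFDerivAt (fun q' : Fin (2*n+1) → ℝ => cc n L j * q' (em n (sg n j)))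
      (cc n L j • prj (em n (sg n j))) q := (hasP _ q).const_mul _
  have h5 := h3.mul h4
  have h6 := h2.add h5
  simp only [Gf, G'c]
  exact h6

theorem G'c_app_em (i j : Fin (2*n)) (q : Fin (2*n+1) → ℝ) :
    G'c n L j q (Pi.single (em n i) 1)
      = 2*(aa n L i * q (em n i))*(aa n L j * q (em n j))
        + (if i = j then Sq n L q * aa n L j else 0)
        + (if i = sg n j then 8 * q (tI n) * cc n L j else 0) := by
  rw [G'c]
  simp only [ContinuousLinearMap.add_apply, ContinuousLinearMap.smul_apply, smul_eq_mul]
  rw [S'_app_em, prj_single, prj_single, prj_single, if_neg (Ne.symm (em_ne_tI i))]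
  have e1 : (if em n j = em n i then (1:ℝ) else 0) = (if i = j then 1 else 0) :=
    if_congr (em_inj.trans eq_comm) rfl rfl
  have e2 : (if em n (sg n j) = em n i then (1:ℝ) else 0) = (if i = sg n j then 1 else 0) :=
    if_congr (em_inj.trans eq_comm) rfl rfl
  rw [e1, e2]
  split_ifs <;> ring

theorem G'c_app_t (j : Fin (2*n)) (q : Fin (2*n+1) → ℝ) :
    G'c n L j q (Pi.single (tI n) 1) = 8 * (cc n L j * q (em n (sg n j))) := by
  rw [G'c]
  simp only [ContinuousLinearMap.add_apply, ContinuousLinearMap.smul_apply, smul_eq_mul]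
  rw [S'_app_t, prj_single, prj_single, prj_single, if_pos rfl,
    if_neg (em_ne_tI j), if_neg (em_ne_tI (sg n j))]
  ring

theorem hasV (γ : ℝ) (j : Fin (2*n)) (q : Fin (2*n+1) → ℝ) (hq : Fq n L q ≠ 0) :
    HasFDerivAt (Vf n L γ j)
      (γ • ((Fq n L q ^ (γ/4 - 1)) • G'c n L j q
        + Gf n L j q • ((γ/4 - 1) * Fq n L q ^ (γ/4 - 1 - 1)) • F' n L q)) q := by
  have hr := (hasF (L := L) q).rpow_const (p := γ/4 - 1) (Or.inl hq)
  have h := (hr.mul (hasG L j q)).const_mul γ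
  exact h

theorem XXu (γ : ℝ) (i j : Fin (2*n)) (q : Fin (2*n+1) → ℝ) (hq : 0 < Fq n L q) :
    X n L i (X n L j (Uf n L γ)) q
      = γ*(γ-4) * (Fq n L q)^(γ/4-2) * Gf n L i q * Gf n L j q
        + γ * (Fq n L q)^(γ/4-1) * Hf n L i j q := by
  have hopen : IsOpen {x : Fin (2*n+1) → ℝ | 0 < Fq n L x} :=
    isOpen_lt continuous_const (contF L)
  have hev : X n L j (Uf n L γ) =ᶠ[nhds q] Vf n L γ j :=
    Filter.eventually_of_mem (hopen.mem_nhds hq) (fun x hx => Xu L γ j x (ne_of_gt hx))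
  rw [X_eq, pderiv', pderiv', hev.fderiv_eq, (hasV L γ j q (ne_of_gt hq)).fderiv]
  simp only [ContinuousLinearMap.smul_apply, ContinuousLinearMap.add_apply, smul_eq_mul]
  rw [G'c_app_em, G'c_app_t, F'_app_em, F'_app_t]
  have e : γ/4 - 1 - 1 = γ/4 - 2 := by ring
  rw [e, Hf, Gf, Gf]
  ring

end UCalc


theorem wgt_nonneg (i : Fin (2*n)) : 0 ≤ wgt n L i := by
  unfold wgt; split <;> positivity

end RhoAux


open RhoAux in
theorem rho_power_weighted_p_harmonic
    (n : ℕ) (hn : 1 ≤ n) (L : Fin n → ℝ) (hL : ∀ j, L j ≠ 0)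
    (p : ℝ) (hp : 1 < p) (hpQ : p ≠ 2 * n + 2)
    (u : (Fin (2*n+1) → ℝ) → ℝ)
    (hu : u = fun q => (rho n L q) ^ ((p - (2 * n + 2)) / (p - 1))) :
    ∀ q : Fin (2*n+1) → ℝ, q ≠ 0 → Mfun n L u q ≠ 0 →
      (Mfun n L u q) ^ (p - 2) * ∑ i : Fin (2*n), wgt n L i * X n L i (X n L i u) q
        + (p - 2) * (Mfun n L u q) ^ (p - 4) *
            ∑ i : Fin (2*n), ∑ j : Fin (2*n),
              wgt n L i * wgt n L j * X n L i (X n L j u) q * X n L i u q * X n L j u q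
      = 0 := by
  intro q hq0 hMne
  set γ : ℝ := (p - (2 * (n:ℝ) + 2)) / (p - 1) with hγdef
  have hu2 : u = Uf n L γ := by
    rw [hu]
    funext q'
    rw [Uf, rho_eq, ← Real.rpow_mul (Fq_nonneg n L q')]
    congr 1
    ring
  rw [hu2] at hMne ⊢
  have hF : 0 < Fq n L q := Fq_pos n L hL q hq0
  have hFne : Fq n L q ≠ 0 := ne_of_gt hF
  set S : ℝ := Sq n L q with hSdef
  set F : ℝ := Fq n L q with hFdef
  set E1 : ℝ := F ^ (γ/4 - 1) with hE1def
  set E2 : ℝ := F ^ (γ/4 - 2) with hE2def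
  set M : ℝ := Mfun n L (Uf n L γ) q with hMdef
  have hE12 : E1 = E2 * F := by
    rw [hE1def, hE2def, ← Real.rpow_add_one hFne]
    congr 1
    ring
  -- M^2
  have hM2 : M^2 = γ^2 * E1^2 * (S * F) := by
    rw [hMdef, Mfun, Real.sq_sqrt (Finset.sum_nonneg fun i _ =>
      mul_nonneg (wgt_nonneg L i) (sq_nonneg _))]
    have key : ∀ i : Fin (2*n), wgt n L i * (X n L i (Uf n L γ) q)^2
        = (γ^2 * E1^2) * (wgt n L i * (Gf n L i q)^2) := by
      intro i
      rw [Xu L γ i q hFne, Vf]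
      ring
    rw [Finset.sum_congr rfl (fun i _ => key i), ← Finset.mul_sum, sumP1 L q hL]
  -- the diagonal sum
  have hSum1 : ∑ i : Fin (2*n), wgt n L i * X n L i (X n L i (Uf n L γ)) q
      = γ*(γ-4)*E2*(S*F) + γ*E1*((2*(n:ℝ)+4)*S) := by
    have key : ∀ i : Fin (2*n), wgt n L i * X n L i (X n L i (Uf n L γ)) q
        = (γ*(γ-4)*E2) * (wgt n L i * (Gf n L i q)^2) + (γ*E1) * (wgt n L i * Hf n L i i q) := by
      intro i
      rw [XXu L γ i i q hF]
      ring
    rw [Finset.sum_congr rfl (fun i _ => key i), Finset.sum_add_distrib, ← Finset.mul_sum,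
      ← Finset.mul_sum, sumP1 L q hL, sumP2 L q hn hL]
  -- the double sum
  have hSum2 : ∑ i : Fin (2*n), ∑ j : Fin (2*n),
        wgt n L i * wgt n L j * X n L i (X n L j (Uf n L γ)) q
          * X n L i (Uf n L γ) q * X n L j (Uf n L γ) q
      = (γ^3*(γ-4)*E1^2*E2) * ((S*F) * (S*F)) + (γ^3*E1^3) * (3*S^2*F) := by
    have key : ∀ i j : Fin (2*n),
        wgt n L i * wgt n L j * X n L i (X n L j (Uf n L γ)) q
          * X n L i (Uf n L γ) q * X n L j (Uf n L γ) q
        = (γ^3*(γ-4)*E1^2*E2) * ((wgt n L i * (Gf n L i q)^2) * (wgt n L j * (Gf n L j q)^2))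
          + (γ^3*E1^3) *
              (wgt n L i * wgt n L j * Gf n L i q * Gf n L j q * Hf n L i j q) := by
      intro i j
      rw [XXu L γ i j q hF, Xu L γ i q hFne, Xu L γ j q hFne, Vf, Vf]
      ring
    rw [Finset.sum_congr rfl (fun i _ => Finset.sum_congr rfl (fun j _ => key i j))]
    have split : ∀ i : Fin (2*n), ∑ j : Fin (2*n),
        ((γ^3*(γ-4)*E1^2*E2) * ((wgt n L i * (Gf n L i q)^2) * (wgt n L j * (Gf n L j q)^2))
          + (γ^3*E1^3) *
              (wgt n L i * wgt n L j * Gf n L i q * Gf n L j q * Hf n L i j q))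
        = (γ^3*(γ-4)*E1^2*E2) * ((wgt n L i * (Gf n L i q)^2) *
            (∑ j : Fin (2*n), wgt n L j * (Gf n L j q)^2))
          + (γ^3*E1^3) * (∑ j : Fin (2*n),
              wgt n L i * wgt n L j * Gf n L i q * Gf n L j q * Hf n L i j q) := by
      intro i
      rw [Finset.sum_add_distrib, ← Finset.mul_sum, ← Finset.mul_sum, ← Finset.mul_sum]
    rw [Finset.sum_congr rfl (fun i _ => split i), Finset.sum_add_distrib, ← Finset.mul_sum,
      ← Finset.mul_sum]
    have e1 : ∑ i : Fin (2*n), (wgt n L i * (Gf n L i q)^2) *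
        (∑ j : Fin (2*n), wgt n L j * (Gf n L j q)^2)
        = (∑ i : Fin (2*n), wgt n L i * (Gf n L i q)^2) *
          (∑ j : Fin (2*n), wgt n L j * (Gf n L j q)^2) := by
      rw [Finset.sum_mul]
    rw [e1, sumP1 L q hL, sumP3 L q hL]
  -- power manipulations
  have hMpos : 0 < M := lt_of_le_of_ne (by rw [hMdef, Mfun]; exact Real.sqrt_nonneg _)
    (Ne.symm hMne)
  have hMp : M ^ (p-2) = M ^ (p-4) * M^2 := by
    rw [show p - 2 = (p-4) + 2 by ring, Real.rpow_add hMpos,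
      show ((2:ℝ) = ((2:ℕ):ℝ)) by norm_num, Real.rpow_natCast]
  have hp1 : p - 1 ≠ 0 := ne_of_gt (by linarith)
  have hγeq : γ * (p - 1) = p - (2*(n:ℝ)+2) := by
    rw [hγdef, div_mul_cancel₀ _ hp1]
  rw [hSum1, hSum2, hMp, hM2, hE12]
  linear_combination (M^(p-4) * γ^3 * S^2 * F^4 * E2^3) * hγeq
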